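/- Let H be a complex Hilbert space and let Φ : B(H) → B(H) be a unital completely positive linear map that is continuous with respect to the weak operator topology. Define C₂ = {A ∈ B(H) : Φ(A) = A, Φ(A*A) = A*A, and Φ(AA*) = AA*}. Then: (a) C₂ = {A ∈ B(H) : Φ(b) = b for every b ∈ C*(1,A)}; (b) C₂ is a star-subalgebra of B(H) containing the identity (closed under addition, multiplication, scalar multiplication and adjoints); and (c) C₂ is closed in the weak operator topology. -/

import Mathlib

open scoped Matrix InnerProductSpace Topology

/-- A map between star rings is *completely positive* if, for every `n`, applying it
entrywise to `n × n` matrices sends positive elements (i.e. those of the form `Nᴴ * N`)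
of the matrix ring over the domain to positive elements of the matrix ring over the
codomain. -/
def CompletelyPositive {A B : Type*} [NonUnitalNonAssocSemiring A] [StarRing A]
    [NonUnitalNonAssocSemiring B] [StarRing B] (Φ : A → B) : Prop :=
  ∀ n : ℕ, ∀ M : Matrix (Fin n) (Fin n) A,
    (∃ N : Matrix (Fin n) (Fin n) A, M = Nᴴ * N) →
      ∃ P : Matrix (Fin n) (Fin n) B, M.map Φ = Pᴴ * P

/-- The weak operator topology on `B(H)`: the topology of pointwise convergence of the
scalar pairings `T ↦ ⟪T x, y⟫` for `x y : H`. -/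
noncomputable def wot (H : Type*) [NormedAddCommGroup H] [InnerProductSpace ℂ H] :
    TopologicalSpace (H →L[ℂ] H) :=
  TopologicalSpace.induced
    (fun T : H →L[ℂ] H => fun p : H × H => (⟪T p.1, p.2⟫_ℂ)) inferInstance

section Aux

variable {H : Type*} [NormedAddCommGroup H] [InnerProductSpace ℂ H] [CompleteSpace H]

/-! ### Weak operator topology lemmas -/

lemma wot_cont_inner (x y : H) :
    Continuous[wot H, inferInstance] fun T : H →L[ℂ] H => (⟪T x, y⟫_ℂ) := by
  letI : TopologicalSpace (H →L[ℂ] H) := wot H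
  have h : Continuous (fun T : H →L[ℂ] H => fun p : H × H => (⟪T p.1, p.2⟫_ℂ)) :=
    continuous_induced_dom
  exact (continuous_apply ((x, y) : H × H)).comp h

lemma wot_cont_rng {α : Type*} (tα : TopologicalSpace α) (g : α → (H →L[ℂ] H))
    (h : ∀ x y : H, Continuous[tα, inferInstance] fun T => (⟪g T x, y⟫_ℂ)) :
    Continuous[tα, wot H] g := by
  letI := tα
  unfold wot
  exact continuous_induced_rng.mpr (continuous_pi fun p => h p.1 p.2)

lemma wot_cont_mul_right (c : H →L[ℂ] H) :
    Continuous[wot H, wot H] (fun b : H →L[ℂ] H => b * c) := by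
  refine wot_cont_rng _ _ fun x y => ?_
  exact wot_cont_inner (c x) y

lemma wot_cont_mul_left (c : H →L[ℂ] H) :
    Continuous[wot H, wot H] (fun b : H →L[ℂ] H => c * b) := by
  refine wot_cont_rng _ _ fun x y => ?_
  have h := wot_cont_inner (H := H) x (ContinuousLinearMap.adjoint c y)
  convert h using 2 with b
  rw [ContinuousLinearMap.adjoint_inner_right]
  rfl

lemma wot_cont_star :
    Continuous[wot H, wot H] (fun b : H →L[ℂ] H => star b) := by
  refine wot_cont_rng _ _ fun x y => ?_
  letI : TopologicalSpace (H →L[ℂ] H) := wot H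
  have h : Continuous fun T : H →L[ℂ] H => (starRingEnd ℂ) (⟪T y, x⟫_ℂ) :=
    (RCLike.continuous_conj).comp (wot_cont_inner y x)
  convert h using 2 with b
  rw [ContinuousLinearMap.star_eq_adjoint, ContinuousLinearMap.adjoint_inner_left,
    ← inner_conj_symm]

lemma wot_closed_eq (f g : (H →L[ℂ] H) → (H →L[ℂ] H))
    (hf : Continuous[wot H, wot H] f) (hg : Continuous[wot H, wot H] g) :
    IsClosed[wot H] {b | f b = g b} := by
  letI : TopologicalSpace (H →L[ℂ] H) := wot H
  have hset : {b | f b = g b} = ⋂ x : H, ⋂ y : H, {b | (⟪f b x, y⟫_ℂ) = (⟪g b x, y⟫_ℂ)} := by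
    ext b
    simp only [Set.mem_iInter, Set.mem_setOf_eq]
    constructor
    · intro h x y; rw [h]
    · intro h
      exact ContinuousLinearMap.ext fun x => ext_inner_right ℂ fun y => h x y
  rw [hset]
  exact isClosed_iInter fun x => isClosed_iInter fun y =>
    isClosed_eq ((wot_cont_inner x y).comp hf) ((wot_cont_inner x y).comp hg)

lemma norm_to_wot_cont :
    Continuous[inferInstance, wot H] (id : (H →L[ℂ] H) → (H →L[ℂ] H)) := by
  refine wot_cont_rng _ _ fun x y => ?_
  exact ((ContinuousLinearMap.apply ℂ H x).continuous).inner continuous_const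

lemma isClosed_of_wot_closed {s : Set (H →L[ℂ] H)} (h : IsClosed[wot H] s) :
    IsClosed s := by
  have := @IsClosed.preimage _ _ _ (wot H) id (norm_to_wot_cont (H := H)) _ h
  simpa using this

/-! ### Algebraic consequences of complete positivity -/

variable (Φ : (H →L[ℂ] H) →ₗ[ℂ] (H →L[ℂ] H))

lemma cp_star_map (hcp : CompletelyPositive (⇑Φ)) (a : H →L[ℂ] H) :
    Φ (star a) = star (Φ a) := by
  classical
  set N : Matrix (Fin 2) (Fin 2) (H →L[ℂ] H) := ![![1, a], ![0, 0]] with hN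
  obtain ⟨P, hP⟩ := hcp 2 (Nᴴ * N) ⟨N, rfl⟩
  have h01 : Φ ((Nᴴ * N) 0 1) = (Pᴴ * P) 0 1 := congrFun (congrFun hP 0) 1
  have h10 : Φ ((Nᴴ * N) 1 0) = (Pᴴ * P) 1 0 := congrFun (congrFun hP 1) 0
  have e01 : (Nᴴ * N) 0 1 = a := by
    rw [Matrix.mul_apply, Fin.sum_univ_two, Matrix.conjTranspose_apply,
      Matrix.conjTranspose_apply]
    simp [Matrix.mul_apply, Fin.sum_univ_two, hN, Matrix.conjTranspose_apply]
  have e10 : (Nᴴ * N) 1 0 = star a := by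
    rw [Matrix.mul_apply, Fin.sum_univ_two, Matrix.conjTranspose_apply,
      Matrix.conjTranspose_apply]
    simp [Matrix.mul_apply, Fin.sum_univ_two, hN, Matrix.conjTranspose_apply]
  have ehermit : (Pᴴ * P) 1 0 = star ((Pᴴ * P) 0 1) := by
    simp [Matrix.mul_apply, Fin.sum_univ_two, Matrix.conjTranspose_apply, star_mul]
  rw [e10] at h10; rw [e01] at h01
  rw [h10, ehermit, ← h01]

lemma sum_star_mul_self_eq_zero {n : ℕ} (s : Fin n → (H →L[ℂ] H))
    (h : ∑ k, star (s k) * s k = 0) : ∀ k, s k = 0 := by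
  have hx : ∀ x : H, ∑ k, (‖s k x‖ ^ 2 : ℝ) = 0 := by
    intro x
    have h1 : ∑ k, (star (s k) * s k) x = 0 := by
      rw [← ContinuousLinearMap.sum_apply, h]; rfl
    have h2 : ∑ k, (⟪(star (s k) * s k) x, x⟫_ℂ) = 0 := by
      rw [← sum_inner, h1, inner_zero_left]
    have h3 : ∀ k : Fin n, (⟪(star (s k) * s k) x, x⟫_ℂ) = ((‖s k x‖ ^ 2 : ℝ) : ℂ) := by
      intro k
      rw [ContinuousLinearMap.mul_apply, ContinuousLinearMap.star_eq_adjoint,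
        ContinuousLinearMap.adjoint_inner_left, inner_self_eq_norm_sq_to_K]
      norm_cast
    rw [Finset.sum_congr rfl fun k _ => h3 k] at h2
    exact_mod_cast h2
  intro k
  ext x
  have h4 := (Finset.sum_eq_zero_iff_of_nonneg
      (fun i _ => sq_nonneg (‖s i x‖))).mp (hx x) k (Finset.mem_univ k)
  have : ‖s k x‖ = 0 := by nlinarith [norm_nonneg (s k x)]
  simpa using norm_eq_zero.mp this

lemma cp_mul_left (hunital : Φ 1 = 1) (hcp : CompletelyPositive (⇑Φ))
    (a : H →L[ℂ] H) (ha : Φ (star a * a) = star (Φ a) * Φ a) (b : H →L[ℂ] H) :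
    Φ (star a * b) = star (Φ a) * Φ b := by
  classical
  set N : Matrix (Fin 3) (Fin 3) (H →L[ℂ] H) :=
    Matrix.of (fun i j => if i = 0 then ![1, a, b] j else 0) with hN
  obtain ⟨P, hP⟩ := hcp 3 (Nᴴ * N) ⟨N, rfl⟩
  set p : Fin 3 → (H →L[ℂ] H) := fun k => P k 0 with hp
  set q : Fin 3 → (H →L[ℂ] H) := fun k => P k 1 with hq
  set r : Fin 3 → (H →L[ℂ] H) := fun k => P k 2 with hr
  have hent : ∀ i j : Fin 3, Φ ((Nᴴ * N) i j) = ∑ k, star (P k i) * P k j := by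
    intro i j
    have h := congrFun (congrFun hP i) j
    simpa [Matrix.map_apply, Matrix.mul_apply, Matrix.conjTranspose_apply] using h
  have e00 : ∑ k, star (p k) * p k = 1 := by
    have := hent 0 0
    simp [Matrix.mul_apply, Fin.sum_univ_three, hN, Matrix.of_apply,
      Matrix.conjTranspose_apply, hunital] at this
    simpa [hp, Fin.sum_univ_three] using this.symm
  have e01 : ∑ k, star (p k) * q k = Φ a := by
    have := hent 0 1
    simp [Matrix.mul_apply, Fin.sum_univ_three, hN, Matrix.of_apply,
      Matrix.conjTranspose_apply] at this
    simpa [hp, hq, Fin.sum_univ_three] using this.symm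
  have e02 : ∑ k, star (p k) * r k = Φ b := by
    have := hent 0 2
    simp [Matrix.mul_apply, Fin.sum_univ_three, hN, Matrix.of_apply,
      Matrix.conjTranspose_apply] at this
    simpa [hp, hr, Fin.sum_univ_three] using this.symm
  have e11 : ∑ k, star (q k) * q k = star (Φ a) * Φ a := by
    have := hent 1 1
    simp [Matrix.mul_apply, Fin.sum_univ_three, hN, Matrix.of_apply,
      Matrix.conjTranspose_apply] at this
    rw [ha] at this
    simpa [hq, Fin.sum_univ_three] using this.symm
  have e12 : Φ (star a * b) = ∑ k, star (q k) * r k := by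
    have := hent 1 2
    simp only [Matrix.mul_apply, Fin.sum_univ_three] at this ⊢
    simpa [hN, hq, hr, Matrix.of_apply, Matrix.conjTranspose_apply] using this
  have e10 : ∑ k, star (q k) * p k = star (Φ a) := by
    have := congrArg star e01
    rw [star_sum] at this
    simpa [star_mul, star_star] using this
  set X := Φ a with hX
  set s : Fin 3 → (H →L[ℂ] H) := fun k => q k - p k * X with hs
  have hsum : ∑ k, star (s k) * s k = 0 := by
    have h1 : ∑ k, star (s k) * s k
        = (∑ k, star (q k) * q k) - (∑ k, star (q k) * p k) * X
          - star X * (∑ k, star (p k) * q k) + star X * ((∑ k, star (p k) * p k) * X) := by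
      simp only [hs, star_sub, star_mul, Finset.sum_mul, Finset.mul_sum, sub_mul, mul_sub,
        Finset.sum_sub_distrib, mul_assoc]
      abel
    rw [h1, e00, e01, e10, e11]
    noncomm_ring
  have hz := sum_star_mul_self_eq_zero s hsum
  have hqk : ∀ k, q k = p k * X := by
    intro k
    have := hz k
    rw [hs] at this
    simpa [sub_eq_zero] using this
  rw [e12]
  calc ∑ k, star (q k) * r k = ∑ k, star X * (star (p k) * r k) := by
        refine Finset.sum_congr rfl fun k _ => ?_
        rw [hqk k, star_mul, mul_assoc]
      _ = star X * ∑ k, star (p k) * r k := by rw [Finset.mul_sum]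
      _ = star (Φ a) * Φ b := by rw [e02]

lemma cp_mul_right (hunital : Φ 1 = 1) (hcp : CompletelyPositive (⇑Φ))
    (a : H →L[ℂ] H) (ha : Φ (star a * a) = star (Φ a) * Φ a) (b : H →L[ℂ] H) :
    Φ (b * a) = Φ b * Φ a := by
  have h := cp_mul_left Φ hunital hcp a ha (star b)
  calc Φ (b * a) = star (Φ (star (b * a))) := by rw [cp_star_map Φ hcp, star_star]
    _ = star (Φ (star a * star b)) := by rw [star_mul]
    _ = star (star (Φ a) * Φ (star b)) := by rw [h]
    _ = star (Φ (star b)) * Φ a := by rw [star_mul, star_star]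
    _ = Φ b * Φ a := by rw [cp_star_map Φ hcp, star_star]

lemma cp_mul_left' (hunital : Φ 1 = 1) (hcp : CompletelyPositive (⇑Φ))
    (a : H →L[ℂ] H) (ha : Φ (a * star a) = Φ a * star (Φ a)) (b : H →L[ℂ] H) :
    Φ (a * b) = Φ a * Φ b := by
  have ha' : Φ (star (star a) * star a) = star (Φ (star a)) * Φ (star a) := by
    rw [star_star, cp_star_map Φ hcp, star_star, ha]
  have h := cp_mul_left Φ hunital hcp (star a) ha' b
  rw [star_star] at h
  rw [h, cp_star_map Φ hcp, star_star]

/-- The fixed multiplicative domain of `Φ`, as a star-subalgebra. -/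
def multFix (hunital : Φ 1 = 1) (hcp : CompletelyPositive (⇑Φ)) :
    StarSubalgebra ℂ (H →L[ℂ] H) where
  carrier := {b | Φ b = b ∧ (∀ c, Φ (b * c) = b * Φ c) ∧ (∀ c, Φ (c * b) = Φ c * b)}
  mul_mem' := by
    rintro x y ⟨hx1, hx2, hx3⟩ ⟨hy1, hy2, hy3⟩
    refine ⟨by rw [hx2 y, hy1], fun c => ?_, fun c => ?_⟩
    · rw [mul_assoc, hx2, hy2, mul_assoc]
    · rw [← mul_assoc, hy3, hx3, mul_assoc]
  one_mem' := ⟨hunital, fun c => by simp [hunital], fun c => by simp [hunital]⟩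
  add_mem' := by
    rintro x y ⟨hx1, hx2, hx3⟩ ⟨hy1, hy2, hy3⟩
    refine ⟨by rw [map_add, hx1, hy1], fun c => ?_, fun c => ?_⟩
    · rw [add_mul, map_add, hx2, hy2, add_mul]
    · rw [mul_add, map_add, hx3, hy3, mul_add]
  zero_mem' := ⟨map_zero Φ, fun c => by simp, fun c => by simp⟩
  algebraMap_mem' := by
    intro t
    rw [Algebra.algebraMap_eq_smul_one]
    refine ⟨by rw [map_smul, hunital], fun c => ?_, fun c => ?_⟩
    · rw [smul_mul_assoc, one_mul, map_smul, smul_mul_assoc, one_mul]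
    · rw [mul_smul_comm, mul_one, map_smul, mul_smul_comm, mul_one]
  star_mem' := by
    rintro b ⟨h1, h2, h3⟩
    refine ⟨by rw [cp_star_map Φ hcp, h1], fun c => ?_, fun c => ?_⟩
    · calc Φ (star b * c) = star (Φ (star (star b * c))) := by
            rw [cp_star_map Φ hcp, star_star]
        _ = star (Φ (star c * b)) := by rw [star_mul, star_star]
        _ = star (Φ (star c) * b) := by rw [h3 (star c)]
        _ = star b * star (Φ (star c)) := by rw [star_mul]
        _ = star b * Φ c := by rw [cp_star_map Φ hcp, star_star]
    · calc Φ (c * star b) = star (Φ (star (c * star b))) := by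
            rw [cp_star_map Φ hcp, star_star]
        _ = star (Φ (b * star c)) := by rw [star_mul, star_star]
        _ = star (b * Φ (star c)) := by rw [h2 (star c)]
        _ = star (Φ (star c)) * star b := by rw [star_mul]
        _ = Φ c * star b := by rw [cp_star_map Φ hcp, star_star]

lemma multFix_wotClosed (hunital : Φ 1 = 1) (hcp : CompletelyPositive (⇑Φ))
    (hwcont : Continuous[wot H, wot H] (⇑Φ)) :
    IsClosed[wot H] ((multFix Φ hunital hcp : Set (H →L[ℂ] H))) := by
  letI : TopologicalSpace (H →L[ℂ] H) := wot H
  have h1 : IsClosed {b : H →L[ℂ] H | Φ b = b} :=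
    wot_closed_eq (⇑Φ) (fun b => b) hwcont continuous_id
  have h2 : ∀ c, IsClosed {b : H →L[ℂ] H | Φ (b * c) = b * Φ c} := fun c =>
    wot_closed_eq (fun b => Φ (b * c)) (fun b => b * Φ c)
      (hwcont.comp (wot_cont_mul_right c)) (wot_cont_mul_right (Φ c))
  have h3 : ∀ c, IsClosed {b : H →L[ℂ] H | Φ (c * b) = Φ c * b} := fun c =>
    wot_closed_eq (fun b => Φ (c * b)) (fun b => Φ c * b)
      (hwcont.comp (wot_cont_mul_left c)) (wot_cont_mul_left (Φ c))
  have hset : (multFix Φ hunital hcp : Set (H →L[ℂ] H))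
      = {b | Φ b = b} ∩ ((⋂ c, {b : H →L[ℂ] H | Φ (b * c) = b * Φ c}) ∩
        (⋂ c, {b : H →L[ℂ] H | Φ (c * b) = Φ c * b})) := by
    ext b
    simp only [Set.mem_inter_iff, Set.mem_iInter, Set.mem_setOf_eq]
    exact Iff.rfl
  rw [hset]
  exact h1.inter ((isClosed_iInter h2).inter (isClosed_iInter h3))

end Aux

/-- **Theorem 5.5.(a) (second-order set of constants).** Let `Φ : B(H) → B(H)` be a
unital completely positive map, continuous for the weak operator topology, and let
`C₂ = {A | Φ(A) = A, Φ(A*A) = A*A, Φ(AA*) = AA*}`. Then `C₂` coincides with the set of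
`A` such that `Φ` fixes all of `C*(1,A)`, it is a star-subalgebra of `B(H)` containing
the identity, and it is closed in the weak operator topology (hence a von Neumann
algebra). -/
theorem second_order_constants_vonNeumann {H : Type*}
    [NormedAddCommGroup H] [InnerProductSpace ℂ H] [CompleteSpace H]
    (Φ : (H →L[ℂ] H) →ₗ[ℂ] (H →L[ℂ] H)) (hunital : Φ 1 = 1)
    (hcp : CompletelyPositive (⇑Φ))
    (hwcont : Continuous[wot H, wot H] (⇑Φ))
    (C₂ : Set (H →L[ℂ] H))
    (hC₂ : C₂ = {A : H →L[ℂ] H |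
      Φ A = A ∧ Φ (star A * A) = star A * A ∧ Φ (A * star A) = A * star A}) :
    C₂ = {A : H →L[ℂ] H | ∀ b ∈ StarAlgebra.elemental ℂ A, Φ b = b} ∧
    (1 : H →L[ℂ] H) ∈ C₂ ∧
    (∀ x ∈ C₂, ∀ y ∈ C₂, x + y ∈ C₂) ∧
    (∀ x ∈ C₂, ∀ y ∈ C₂, x * y ∈ C₂) ∧
    (∀ (c : ℂ), ∀ x ∈ C₂, c • x ∈ C₂) ∧
    (∀ x ∈ C₂, star x ∈ C₂) ∧
    IsClosed[wot H] C₂ := by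
  have smap := cp_star_map Φ hcp
  -- C₂ coincides with the fixed multiplicative domain `multFix`
  have hSC : C₂ = (multFix Φ hunital hcp : Set (H →L[ℂ] H)) := by
    rw [hC₂]
    ext A
    constructor
    · rintro ⟨h1, h2, h3⟩
      refine ⟨h1, fun c => ?_, fun c => ?_⟩
      · rw [cp_mul_left' Φ hunital hcp A (by rw [h1]; exact h3) c, h1]
      · rw [cp_mul_right Φ hunital hcp A (by rw [h1]; exact h2) c, h1]
    · rintro ⟨h1, h2, h3⟩
      refine ⟨h1, ?_, ?_⟩
      · rw [h3 (star A), smap, h1]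
      · rw [h2 (star A), smap, h1]
  have hmem : ∀ A ∈ C₂, A ∈ multFix Φ hunital hcp := by
    intro A hA
    rw [hSC] at hA
    exact hA
  have hSclosed : IsClosed ((multFix Φ hunital hcp : Set (H →L[ℂ] H))) :=
    isClosed_of_wot_closed (multFix_wotClosed Φ hunital hcp hwcont)
  refine ⟨?_, ?_, ?_, ?_, ?_, ?_, ?_⟩
  -- (a)
  · ext A
    simp only [Set.mem_setOf_eq]
    constructor
    · intro hA b hb
      exact ((StarAlgebra.elemental.le_of_mem hSclosed (hmem A hA)) hb).1
    · intro h
      rw [hC₂]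
      have hself := StarAlgebra.elemental.self_mem ℂ A
      exact ⟨h A hself, h _ (mul_mem (star_mem hself) hself),
        h _ (mul_mem hself (star_mem hself))⟩
  -- (b)
  · rw [hSC]; exact one_mem _
  · intro x hx y hy
    rw [hSC] at hx hy ⊢
    exact add_mem hx hy
  · intro x hx y hy
    rw [hSC] at hx hy ⊢
    exact mul_mem hx hy
  · intro c x hx
    rw [hSC] at hx ⊢
    exact SMulMemClass.smul_mem c hx
  · intro x hx
    rw [hSC] at hx ⊢
    exact star_mem hx
  -- (c)
  · letI : TopologicalSpace (H →L[ℂ] H) := wot H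
    have hFix : IsClosed {b : H →L[ℂ] H | Φ b = b} :=
      wot_closed_eq (⇑Φ) (fun b => b) hwcont continuous_id
    have hsub : C₂ ⊆ {b : H →L[ℂ] H | Φ b = b} := by
      rw [hC₂]; exact fun A hA => hA.1
    have hclsub : closure C₂ ⊆ {b : H →L[ℂ] H | Φ b = b} := closure_minimal hsub hFix
    have hstarC : Set.MapsTo (fun b : H →L[ℂ] H => star b) C₂ C₂ := by
      intro x hx
      rw [hSC] at hx ⊢
      exact star_mem hx
    have hstar : Set.MapsTo (fun b : H →L[ℂ] H => star b) (closure C₂) (closure C₂) :=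
      hstarC.closure wot_cont_star
    have hmulC : ∀ c ∈ C₂, Set.MapsTo (fun b : H →L[ℂ] H => b * c) (closure C₂) (closure C₂) := by
      intro c hc
      refine Set.MapsTo.closure ?_ (wot_cont_mul_right c)
      intro x hx
      rw [hSC] at hx hc ⊢
      exact mul_mem hx hc
    have hmul : ∀ A ∈ closure C₂, ∀ B ∈ closure C₂, A * B ∈ closure C₂ := by
      intro A hA B hB
      have hmt : Set.MapsTo (fun b : H →L[ℂ] H => A * b) C₂ (closure C₂) :=
        fun c hc => hmulC c hc hA
      have h2 := hmt.closure (wot_cont_mul_left A) hB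
      rwa [closure_closure] at h2
    have final : closure C₂ ⊆ C₂ := by
      intro A hA
      rw [hC₂]
      refine ⟨hclsub hA, ?_, ?_⟩
      · exact hclsub (hmul _ (hstar hA) _ hA)
      · exact hclsub (hmul _ hA _ (hstar hA))
    exact isClosed_of_closure_subset final
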